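/- Under the MCAR assumption (the pair (X,Y) is independent of the mask P), for every θ ∈ ℝ^d the risk on zero-imputed data decomposes as R_imp(θ) = R(Hθ) + ‖θ‖²_{V⊙Σ}, where R(θ) = E[(Y − θᵀX)²], R_imp(θ) = E[(Y − θᵀ(P⊙X))²], H = diag(ρ_1,…,ρ_d) with ρ_j = P(P_j = 1), V is the covariance matrix of P, and Σ = E[XXᵀ]. -/

import Mathlib

open MeasureTheory ProbabilityTheory Matrix

lemma mul_int_aux {Ω : Type*} {mΩ : MeasurableSpace Ω} {μ : Measure Ω}
    {f g : Ω → ℝ} (hf : MemLp f 2 μ) (hg : MemLp g 2 μ) :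
    Integrable (fun ω => f ω * g ω) μ := by
  have h : MemLp (f • g) 1 μ := hg.smul hf
  rw [← memLp_one_iff_integrable]
  exact h

lemma sq_exp_aux {Ω : Type*} {mΩ : MeasurableSpace Ω} (μ : Measure Ω) {d : ℕ}
    (Y : Ω → ℝ) (Z : Fin d → Ω → ℝ) (c : Fin d → ℝ)
    (hY : Integrable (fun ω => Y ω ^ 2) μ)
    (hYZ : ∀ j, Integrable (fun ω => Y ω * Z j ω) μ)
    (hZZ : ∀ i j, Integrable (fun ω => Z i ω * Z j ω) μ) :
    ∫ ω, (Y ω - ∑ j, c j * Z j ω) ^ 2 ∂μ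
      = ∫ ω, Y ω ^ 2 ∂μ - 2 * ∑ j, c j * ∫ ω, Y ω * Z j ω ∂μ
        + ∑ i, ∑ j, c i * c j * ∫ ω, Z i ω * Z j ω ∂μ := by
  have key : ∀ ω, (Y ω - ∑ j, c j * Z j ω) ^ 2
      = Y ω ^ 2 - 2 * (∑ j, c j * (Y ω * Z j ω))
        + ∑ i, ∑ j, c i * c j * (Z i ω * Z j ω) := by
    intro ω
    have h1 : ∑ j, c j * (Y ω * Z j ω) = Y ω * ∑ j, c j * Z j ω := by
      rw [Finset.mul_sum]; exact Finset.sum_congr rfl fun j _ => by ring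
    have h2 : ∑ i, ∑ j, c i * c j * (Z i ω * Z j ω)
        = (∑ j, c j * Z j ω) * (∑ j, c j * Z j ω) := by
      rw [Finset.sum_mul_sum]; exact Finset.sum_congr rfl fun i _ =>
        Finset.sum_congr rfl fun j _ => by ring
    rw [h1, h2]; ring
  have hYZ' : Integrable (fun ω => 2 * ∑ j, c j * (Y ω * Z j ω)) μ :=
    (integrable_finset_sum _ fun j _ => (hYZ j).const_mul (c j)).const_mul 2
  have hZZ' : Integrable (fun ω => ∑ i, ∑ j, c i * c j * (Z i ω * Z j ω)) μ :=
    integrable_finset_sum _ fun i _ => integrable_finset_sum _ fun j _ =>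
      (hZZ i j).const_mul _
  calc ∫ ω, (Y ω - ∑ j, c j * Z j ω) ^ 2 ∂μ
      = ∫ ω, (Y ω ^ 2 - 2 * (∑ j, c j * (Y ω * Z j ω))
          + ∑ i, ∑ j, c i * c j * (Z i ω * Z j ω)) ∂μ := by
        exact integral_congr_ae (Filter.Eventually.of_forall fun ω => key ω)
    _ = ∫ ω, Y ω ^ 2 ∂μ - 2 * ∑ j, c j * ∫ ω, Y ω * Z j ω ∂μ
        + ∑ i, ∑ j, c i * c j * ∫ ω, Z i ω * Z j ω ∂μ := by
        have hadd := integral_add (hY.sub hYZ') hZZ'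
        simp only [Pi.add_apply, Pi.sub_apply] at hadd
        have hsub := integral_sub hY hYZ'
        rw [hadd, hsub,
          integral_const_mul, integral_finset_sum _ fun j _ => (hYZ j).const_mul (c j),
          integral_finset_sum _ fun i _ => integrable_finset_sum _ fun j _ => (hZZ i j).const_mul _]
        congr 1
        · congr 2
          exact Finset.sum_congr rfl fun j _ => integral_const_mul _ _
        · exact Finset.sum_congr rfl fun i _ => by
            rw [integral_finset_sum _ fun j _ => (hZZ i j).const_mul _]
            exact Finset.sum_congr rfl fun j _ => integral_const_mul _ _

theorem stmt4 {Ω : Type*} {mΩ : MeasurableSpace Ω} (μ : Measure Ω) [IsProbabilityMeasure μ]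
    {d : ℕ} (X : Ω → Fin d → ℝ) (Y : Ω → ℝ) (P : Ω → Fin d → ℝ)
    (hXm : Measurable X) (hYm : Measurable Y) (hPm : Measurable P)
    (hX2 : ∀ j, MemLp (fun ω => X ω j) 2 μ) (hY2 : MemLp Y 2 μ)
    (hP01 : ∀ ω j, P ω j = 0 ∨ P ω j = 1)
    (hMCAR : IndepFun (fun ω => (X ω, Y ω)) P μ)
    (ρ : Fin d → ℝ) (hρ : ∀ j, ρ j = (μ {ω | P ω j = 1}).toReal)
    (V : Matrix (Fin d) (Fin d) ℝ)
    (hV : V = Matrix.of fun i j => ∫ ω, P ω i * P ω j ∂μ - ρ i * ρ j)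
    (Sig : Matrix (Fin d) (Fin d) ℝ)
    (hSig : Sig = Matrix.of fun i j => ∫ ω, X ω i * X ω j ∂μ)
    (θ : Fin d → ℝ) :
    ∫ ω, (Y ω - ∑ j, θ j * (P ω j * X ω j)) ^ 2 ∂μ =
      (∫ ω, (Y ω - ∑ j, (ρ j * θ j) * X ω j) ^ 2 ∂μ) +
        θ ⬝ᵥ (V.hadamard Sig).mulVec θ := by
  have hPj : ∀ j, Measurable (fun ω => P ω j) := fun j => (measurable_pi_apply j).comp hPm
  have hXj : ∀ j, Measurable (fun ω => X ω j) := fun j => (measurable_pi_apply j).comp hXm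
  have hPnorm : ∀ j ω, ‖P ω j‖ ≤ 1 := by
    intro j ω; rcases hP01 ω j with h | h <;> simp [h]
  -- integral of P j
  have hρint : ∀ j, ∫ ω, P ω j ∂μ = ρ j := by
    intro j
    have hs : MeasurableSet {ω | P ω j = 1} := (hPj j) (measurableSet_singleton 1)
    have hind : (fun ω => P ω j) = Set.indicator {ω | P ω j = 1} (fun _ => (1 : ℝ)) := by
      funext ω
      rcases hP01 ω j with h | h <;> simp [Set.indicator_apply, h]
    rw [hρ, hind, integral_indicator_const _ hs]
    simp; rfl
  -- integral of P i * P j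
  have hPPint : ∀ i j, ∫ ω, P ω i * P ω j ∂μ = V i j + ρ i * ρ j := by
    intro i j
    rw [hV]
    simp only [Matrix.of_apply]
    ring
  -- integrability
  have hYY : Integrable (fun ω => Y ω ^ 2) μ := hY2.integrable_sq
  have hYX : ∀ j, Integrable (fun ω => Y ω * X ω j) μ := fun j => mul_int_aux hY2 (hX2 j)
  have hXX : ∀ i j, Integrable (fun ω => X ω i * X ω j) μ := fun i j =>
    mul_int_aux (hX2 i) (hX2 j)
  have hYZ : ∀ j, Integrable (fun ω => Y ω * (P ω j * X ω j)) μ := by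
    intro j
    have h := (hYX j).bdd_mul ((hPj j).aestronglyMeasurable) (Filter.Eventually.of_forall (hPnorm j))
    exact h.congr (Filter.Eventually.of_forall fun ω => by ring)
  have hZZ : ∀ i j, Integrable (fun ω => (P ω i * X ω i) * (P ω j * X ω j)) μ := by
    intro i j
    have hb : ∀ ω, ‖P ω i * P ω j‖ ≤ 1 := by
      intro ω
      rw [norm_mul]
      calc ‖P ω i‖ * ‖P ω j‖ ≤ 1 * 1 :=
            mul_le_mul (hPnorm i ω) (hPnorm j ω) (norm_nonneg _) zero_le_one
        _ = 1 := one_mul 1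
    have h := (hXX i j).bdd_mul (((hPj i).mul (hPj j)).aestronglyMeasurable) (Filter.Eventually.of_forall hb)
    exact h.congr (Filter.Eventually.of_forall fun ω => by simp only [Pi.mul_apply]; ring)
  -- independence consequences
  have F1 : ∀ j, ∫ ω, Y ω * (P ω j * X ω j) ∂μ = (∫ ω, Y ω * X ω j ∂μ) * ρ j := by
    intro j
    have hind : IndepFun (fun ω => Y ω * X ω j) (fun ω => P ω j) μ :=
      hMCAR.comp (φ := fun q : (Fin d → ℝ) × ℝ => q.2 * q.1 j)
        (measurable_snd.mul ((measurable_pi_apply j).comp measurable_fst))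
        (measurable_pi_apply j)
    have h := hind.integral_mul_eq_mul_integral ((hYm.mul (hXj j)).aestronglyMeasurable)
      ((hPj j).aestronglyMeasurable)
    simp only [Pi.mul_apply] at h
    calc ∫ ω, Y ω * (P ω j * X ω j) ∂μ
        = ∫ ω, (Y ω * X ω j) * P ω j ∂μ :=
          integral_congr_ae (Filter.Eventually.of_forall fun ω => by ring)
      _ = (∫ ω, Y ω * X ω j ∂μ) * ∫ ω, P ω j ∂μ := h
      _ = (∫ ω, Y ω * X ω j ∂μ) * ρ j := by rw [hρint j]
  have F2 : ∀ i j, ∫ ω, (P ω i * X ω i) * (P ω j * X ω j) ∂μ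
      = Sig i j * (V i j + ρ i * ρ j) := by
    intro i j
    have hind : IndepFun (fun ω => X ω i * X ω j) (fun ω => P ω i * P ω j) μ :=
      hMCAR.comp (φ := fun q : (Fin d → ℝ) × ℝ => q.1 i * q.1 j)
        (((measurable_pi_apply i).comp measurable_fst).mul
          ((measurable_pi_apply j).comp measurable_fst))
        ((measurable_pi_apply i).mul (measurable_pi_apply j))
    have h := hind.integral_mul_eq_mul_integral (((hXj i).mul (hXj j)).aestronglyMeasurable)
      (((hPj i).mul (hPj j)).aestronglyMeasurable)
    simp only [Pi.mul_apply] at h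
    calc ∫ ω, (P ω i * X ω i) * (P ω j * X ω j) ∂μ
        = ∫ ω, (X ω i * X ω j) * (P ω i * P ω j) ∂μ :=
          integral_congr_ae (Filter.Eventually.of_forall fun ω => by ring)
      _ = (∫ ω, X ω i * X ω j ∂μ) * ∫ ω, P ω i * P ω j ∂μ := h
      _ = Sig i j * (V i j + ρ i * ρ j) := by rw [hPPint i j, hSig]; simp [Matrix.of_apply]
  -- expand both squares
  rw [sq_exp_aux μ Y (fun j ω => P ω j * X ω j) θ hYY hYZ hZZ,
    sq_exp_aux μ Y (fun j ω => X ω j) (fun j => ρ j * θ j) hYY hYX hXX]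
  simp only [F1, F2]
  have hquad : θ ⬝ᵥ (V.hadamard Sig).mulVec θ
      = ∑ i, ∑ j, θ i * (V i j * Sig i j * θ j) := by
    simp [dotProduct, Matrix.mulVec, Matrix.hadamard_apply, Finset.mul_sum]
  rw [hquad]
  have hA : ∑ j, θ j * ((∫ ω, Y ω * X ω j ∂μ) * ρ j)
      = ∑ j, (ρ j * θ j) * ∫ ω, Y ω * X ω j ∂μ :=
    Finset.sum_congr rfl fun j _ => by ring
  have hB : ∑ i, ∑ j, θ i * θ j * (Sig i j * (V i j + ρ i * ρ j))
      = (∑ i, ∑ j, (ρ i * θ i) * (ρ j * θ j) * ∫ ω, X ω i * X ω j ∂μ)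
        + ∑ i, ∑ j, θ i * (V i j * Sig i j * θ j) := by
    rw [← Finset.sum_add_distrib]
    refine Finset.sum_congr rfl fun i _ => ?_
    rw [← Finset.sum_add_distrib]
    refine Finset.sum_congr rfl fun j _ => ?_
    rw [hSig]
    simp only [Matrix.of_apply]
    ring
  rw [hA, hB]
  ring
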